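/- Let H be an n-vertex digraph and k a positive integer such that for every two disjoint sets S, T ⊆ V(H) of size k there exists an edge directed from S to T. Then H contains a directed path with at least n − 2k + 2 vertices. -/

import Mathlib

open Finset

open Classical in
def IsNDLGraph (n d : ℕ) (lam : ℝ) (G : SimpleGraph (Fin n)) : Prop :=
  G.IsRegularOfDegree d ∧ 0 ≤ lam ∧
    ∀ μ : ℝ, Module.End.HasEigenvalue (Matrix.toLin' (G.adjMatrix ℝ)) μ → μ = (d : ℝ) ∨ |μ| ≤ lam

private lemma partition_card {n : ℕ} (F U : Finset (Fin n)) (A : List (Fin n)) (hnd : A.Nodup)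
    (htri : ∀ x : Fin n, (x ∈ F ∧ x ∉ U ∧ x ∉ A) ∨ (x ∉ F ∧ x ∈ U ∧ x ∉ A) ∨
      (x ∉ F ∧ x ∉ U ∧ x ∈ A)) :
    F.card + U.card + A.length = n := by
  have hdisj1 : Disjoint F U := by
    rw [Finset.disjoint_left]; intro a ha hb
    rcases htri a with h|h|h <;> tauto
  have hdisj2 : Disjoint (F ∪ U) A.toFinset := by
    rw [Finset.disjoint_left]; intro a ha hb
    rw [List.mem_toFinset] at hb
    rcases Finset.mem_union.mp ha with h|h <;> rcases htri a with h'|h'|h' <;> tauto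
  have huniv : F ∪ U ∪ A.toFinset = Finset.univ := by
    ext x
    simp only [Finset.mem_union, List.mem_toFinset, Finset.mem_univ, iff_true]
    rcases htri x with h|h|h <;> tauto
  have h2 := Finset.card_union_of_disjoint hdisj2
  rw [huniv, Finset.card_union_of_disjoint hdisj1] at h2
  rw [Finset.card_univ, Fintype.card_fin, List.toFinset_card_of_nodup hnd] at h2
  omega

set_option maxHeartbeats 1000000 in
theorem digraph_long_path (n k : ℕ) (hk : 0 < k) (H : Fin n → Fin n → Prop)
    (hH : ∀ S T : Finset (Fin n), Disjoint S T → S.card = k → T.card = k →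
      ∃ s ∈ S, ∃ t ∈ T, H s t) :
    ∃ p : List (Fin n), p.Nodup ∧ p.Chain' H ∧ (n : ℤ) - 2 * k + 2 ≤ (p.length : ℤ) := by
  suffices h : ∀ m : ℕ, ∀ (F U : Finset (Fin n)) (A : List (Fin n)),
      2 * U.card + A.length ≤ m → A.Nodup → A.Chain' H →
      (∀ x : Fin n, (x ∈ F ∧ x ∉ U ∧ x ∉ A) ∨ (x ∉ F ∧ x ∈ U ∧ x ∉ A) ∨
        (x ∉ F ∧ x ∉ U ∧ x ∈ A)) →
      (∀ f ∈ F, ∀ u ∈ U, ¬ H f u) → F.card ≤ k - 1 →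
      ∃ p : List (Fin n), p.Nodup ∧ p.Chain' H ∧ (n : ℤ) - 2 * k + 2 ≤ (p.length : ℤ) by
    apply h (2 * n) ∅ Finset.univ []
    · simp
    · simp
    · exact List.isChain_nil
    · intro x; right; left; simp
    · intro f hf; simp at hf
    · simp
  intro m
  induction m with
  | zero =>
    intro F U A hm hnd hch htri hFU hF
    have hcard := partition_card F U A hnd htri
    refine ⟨A, hnd, hch, ?_⟩
    have hU : U.card = 0 := by omega
    have hA : A.length = 0 := by omega
    omega
  | succ m ih =>
    intro F U A hm hnd hch htri hFU hF
    have hcard := partition_card F U A hnd htri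
    by_cases hU : U.card ≤ k - 1
    · exact ⟨A, hnd, hch, by omega⟩
    · have hUk : k ≤ U.card := by omega
      rcases List.eq_nil_or_concat A with rfl | ⟨L, v, rfl⟩
      · -- A empty: start a new path with any u ∈ U
        have hUne : U.Nonempty := Finset.card_pos.mp (by omega)
        obtain ⟨u, hu⟩ := hUne
        apply ih F (U.erase u) [u]
        · have := Finset.card_erase_of_mem hu
          simp only [List.length_cons, List.length_nil] at hm ⊢
          omega
        · simp
        · exact List.isChain_singleton u
        · intro x
          by_cases hxu : x = u
          · subst hxu
            right; right
            refine ⟨?_, ?_, by simp⟩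
            · rcases htri x with h|h|h <;> tauto
            · simp
          · rcases htri x with h|h|h <;>
            · simp only [Finset.mem_erase, List.mem_cons, List.not_mem_nil] at h ⊢
              tauto
        · intro f hf w hw
          exact hFU f hf w (Finset.mem_of_mem_erase hw)
        · exact hF
      · -- A = L ++ [v]
        simp only [List.concat_eq_append] at hm hnd hch htri hcard
        by_cases hex : ∃ u ∈ U, H v u
        · -- push
          obtain ⟨u, hu, hvu⟩ := hex
          have huA : u ∉ L ++ [v] := by rcases htri u with h|h|h <;> tauto
          apply ih F (U.erase u) ((L ++ [v]) ++ [u])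
          · have := Finset.card_erase_of_mem hu
            simp only [List.length_append, List.length_cons, List.length_nil] at hm ⊢
            omega
          · rw [List.nodup_append]
            refine ⟨hnd, by simp, by intro a ha b hb h; simp at hb; subst hb; subst h; exact huA ha⟩
          · show List.IsChain H _
            rw [List.isChain_append]
            refine ⟨hch, by simp, ?_⟩
            intro x hx y hy
            simp only [List.getLast?_concat, Option.mem_def, Option.some.injEq] at hx
            simp only [List.head?_cons, Option.mem_def, Option.some.injEq] at hy
            subst hx; subst hy; exact hvu
          · intro x
            by_cases hxu : x = u
            · subst hxu
              right; right
              refine ⟨?_, by simp, by simp⟩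
              rcases htri x with h|h|h <;> tauto
            · rcases htri x with h|h|h <;>
              · simp only [Finset.mem_erase, List.mem_append, List.mem_cons,
                  List.not_mem_nil] at h ⊢
                tauto
          · intro f hf w hw
            exact hFU f hf w (Finset.mem_of_mem_erase hw)
          · exact hF
        · -- pop v
          push_neg at hex
          have hvA : v ∈ L ++ [v] := by simp
          have hvnF : v ∉ F := by rcases htri v with h|h|h <;> tauto
          have hFins : (insert v F).card = F.card + 1 :=
            Finset.card_insert_of_notMem hvnF
          have hFU' : ∀ f ∈ insert v F, ∀ u ∈ U, ¬ H f u := by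
            intro f hf u hu
            rcases Finset.mem_insert.mp hf with rfl | hf
            · exact hex u hu
            · exact hFU f hf u hu
          have hvF : F.card + 1 ≤ k - 1 := by
            by_contra hcon
            have hFk : (insert v F).card = k := by omega
            obtain ⟨T, hTsub, hTcard⟩ := Finset.exists_subset_card_eq hUk
            have hdisj : Disjoint (insert v F) T := by
              rw [Finset.disjoint_left]
              intro a ha haT
              have haU : a ∈ U := hTsub haT
              rcases Finset.mem_insert.mp ha with rfl | ha
              · rcases htri a with h|h|h <;> tauto
              · rcases htri a with h|h|h <;> tauto
            obtain ⟨s, hs, t, ht, hst⟩ := hH _ _ hdisj hFk hTcard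
            exact hFU' s hs t (hTsub ht) hst
          apply ih (insert v F) U L
          · simp only [List.length_append, List.length_cons, List.length_nil] at hm
            omega
          · exact (List.nodup_append.mp hnd).1
          · exact (List.isChain_append.mp hch).1
          · intro x
            by_cases hxv : x = v
            · subst hxv
              left
              refine ⟨Finset.mem_insert_self _ _, ?_, ?_⟩
              · rcases htri x with h|h|h <;> tauto
              · intro hxL
                have := (List.nodup_append.mp hnd).2.2
                exact this x hxL x (by simp) rfl
            · rcases htri x with h|h|h <;>
              · simp only [Finset.mem_insert, List.mem_append, List.mem_cons,
                  List.not_mem_nil] at h ⊢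
                tauto
          · exact hFU'
          · omega
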